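/- Let K_f ∈ ℝ^{NL×NL} be symmetric positive semidefinite, let S ∈ {0,1}^{m×NL} be a binary sampling matrix whose rows are m distinct canonical basis rows of ℝ^{NL}, and suppose K̄_f = S K_f Sᵀ ∈ ℝ^{m×m} is positive definite (hence invertible). Fix b > 0 and define the hypothesis class F_R = { F ∈ ℝ^{N×L} : vec(F) = K_f Sᵀ d̄ for some d̄ ∈ ℝ^m with d̄ᵀ K̄_f d̄ ≤ b² }. Let S_n ∈ {0,1}^{n×NL} be the binary selection matrix whose rows correspond (under column-major vectorization) to the index pairs in S_n. Then R_n(F_R) ≤ q·b·√( trace( S_n K_f Sᵀ K̄_f⁻¹ S K_f S_nᵀ ) ). -/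

import Mathlib

open Matrix

/-- The transductive Rademacher complexity of a class `C` of real `N × L` matrices, for a set
`S_n` of index pairs and `q = 1/m + 1/u`:
`R_n(C) = q · E_σ [sup_{F∈C} ∑_{(i,j)∈S_n} σ_{ij} F_{ij}]`, where the `σ_{ij}`, `(i,j) ∈ S_n`,
are i.i.d. uniform on `{−1,+1}` (the expectation is the average over all `2^{NL}` sign
patterns). -/
noncomputable def TRC {N L : ℕ} (q : ℝ) (Sn : Finset (Fin N × Fin L))
    (C : Set (Matrix (Fin N) (Fin L) ℝ)) : ℝ :=
  q * ((∑ ε : Fin N × Fin L → Bool,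
      sSup ((fun F => ∑ p ∈ Sn, (if ε p then (1 : ℝ) else -1) * F p.1 p.2) '' C)) / 2 ^ (N * L))

/-- Column-major vectorization of a real `N × L` matrix: the stacked columns, as a vector
indexed by pairs `(column, row)`. -/
def vecCM {N L : ℕ} (F : Matrix (Fin N) (Fin L) ℝ) : Fin L × Fin N → ℝ :=
  fun p => F p.2 p.1

/-- The binary sampling matrix in `{0,1}^{m×NL}` whose rows are the canonical basis rows of
`ℝ^{NL}` (indexed in column-major order by `Fin L × Fin N`) selected by `φ` (for injective `φ`,
these are `m` distinct identity rows). -/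
def sampMat {N L m : ℕ} (φ : Fin m → Fin L × Fin N) : Matrix (Fin m) (Fin L × Fin N) ℝ :=
  Matrix.of fun r c => if φ r = c then 1 else 0

/-- The binary selection matrix of the index set `S_n`: its rows are the canonical basis rows
of `ℝ^{NL}` corresponding, under column-major vectorization (vector index `(j, i)` for matrix
entry `(i, j)`), to the index pairs in `S_n`. -/
def selMat {N L : ℕ} (Sn : Finset (Fin N × Fin L)) :
    Matrix {x // x ∈ Sn} (Fin L × Fin N) ℝ :=
  Matrix.of fun r c => if (r.1.2, r.1.1) = c then 1 else 0

lemma transpose_eq_of_herm {m n : Type*} {A : Matrix m n ℝ} {B : Matrix n m ℝ}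
    (h : Aᴴ = B) : Aᵀ = B := h

lemma psd_cs {m : Type*} [Fintype m] (A : Matrix m m ℝ) (hA : A.PosSemidef)
    (w d : m → ℝ) :
    (w ⬝ᵥ (A *ᵥ d)) ^ 2 ≤ (w ⬝ᵥ (A *ᵥ w)) * (d ⬝ᵥ (A *ᵥ d)) := by
  have hsym : d ⬝ᵥ (A *ᵥ w) = w ⬝ᵥ (A *ᵥ d) := by
    rw [dotProduct_mulVec, ← mulVec_transpose, transpose_eq_of_herm hA.1.eq, dotProduct_comm]
  have key : ∀ t : ℝ, 0 ≤ (d ⬝ᵥ (A *ᵥ d)) * (t * t) + (2 * (w ⬝ᵥ (A *ᵥ d))) * t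
      + (w ⬝ᵥ (A *ᵥ w)) := by
    intro t
    have h0 := hA.dotProduct_mulVec_nonneg (w + t • d)
    simp only [star_trivial] at h0
    have expand : (w + t • d) ⬝ᵥ (A *ᵥ (w + t • d))
        = (d ⬝ᵥ (A *ᵥ d)) * (t * t) + (2 * (w ⬝ᵥ (A *ᵥ d))) * t + (w ⬝ᵥ (A *ᵥ w)) := by
      simp only [mulVec_add, mulVec_smul, dotProduct_add, add_dotProduct, dotProduct_smul,
        smul_dotProduct, smul_eq_mul, hsym]
      ring
    linarith [expand ▸ h0]
  have hd := discrim_le_zero (by intro x; simpa using key x)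
  rw [discrim] at hd
  nlinarith

lemma cs_inv {m : Type*} [Fintype m] [DecidableEq m] (A : Matrix m m ℝ) (hA : A.PosDef)
    (v d : m → ℝ) :
    v ⬝ᵥ d ≤ Real.sqrt (v ⬝ᵥ (A⁻¹ *ᵥ v)) * Real.sqrt (d ⬝ᵥ (A *ᵥ d)) := by
  set w := A⁻¹ *ᵥ v with hw
  have hv : A *ᵥ w = v := by
    rw [hw, mulVec_mulVec, Matrix.mul_nonsing_inv _ (isUnit_iff_isUnit_det _ |>.1 hA.isUnit),
      one_mulVec]
  have hsym : ∀ x y : m → ℝ, x ⬝ᵥ (A *ᵥ y) = y ⬝ᵥ (A *ᵥ x) := by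
    intro x y
    rw [dotProduct_mulVec, ← mulVec_transpose, transpose_eq_of_herm hA.1.eq, dotProduct_comm]
  have h1 : v ⬝ᵥ d = w ⬝ᵥ (A *ᵥ d) := by rw [← hv, dotProduct_comm, hsym]
  have h2 : v ⬝ᵥ w = w ⬝ᵥ (A *ᵥ w) := by rw [dotProduct_comm, ← hv]
  have h3 := psd_cs A hA.posSemidef w d
  have hww : 0 ≤ w ⬝ᵥ (A *ᵥ w) := by simpa using hA.posSemidef.dotProduct_mulVec_nonneg w
  rw [h1]
  calc w ⬝ᵥ (A *ᵥ d) ≤ |w ⬝ᵥ (A *ᵥ d)| := le_abs_self _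
    _ = Real.sqrt ((w ⬝ᵥ (A *ᵥ d)) ^ 2) := (Real.sqrt_sq_eq_abs _).symm
    _ ≤ Real.sqrt ((w ⬝ᵥ (A *ᵥ w)) * (d ⬝ᵥ (A *ᵥ d))) := Real.sqrt_le_sqrt h3
    _ = _ := by rw [Real.sqrt_mul hww, h2]

lemma sign_orth {α : Type*} [Fintype α] [DecidableEq α] {p p' : α} (h : p ≠ p') :
    ∑ ε : α → Bool, (if ε p then (1:ℝ) else -1) * (if ε p' then 1 else -1) = 0 := by
  set f : (α → Bool) → (α → Bool) := fun ε => Function.update ε p (!(ε p)) with hf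
  have hinv : Function.Involutive f := by
    intro ε
    ext x
    by_cases hx : x = p
    · subst hx; simp [hf]
    · simp [hf, Function.update_of_ne hx]
  have key := Equiv.sum_comp (hinv.toPerm f)
    (fun ε => (if ε p then (1:ℝ) else -1) * (if ε p' then 1 else -1))
  change (∑ ε, (if (f ε) p then (1:ℝ) else -1) * (if (f ε) p' then 1 else -1)) = _ at key
  have step : ∀ ε : α → Bool,
      (if (f ε) p then (1:ℝ) else -1) * (if (f ε) p' then 1 else -1)
      = -((if ε p then (1:ℝ) else -1) * (if ε p' then 1 else -1)) := by
    intro ε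
    have h1 : (f ε) p = !(ε p) := by simp [hf]
    have h2 : (f ε) p' = ε p' := by simp [hf, Function.update_of_ne (Ne.symm h)]
    rw [h1, h2]
    cases ε p <;> cases ε p' <;> norm_num
  simp only [step, Finset.sum_neg_distrib] at key
  linarith

theorem trc_kkmcex_le {N L : ℕ} (m u : ℕ) (hm : 1 ≤ m) (hu : 1 ≤ u)
    (Sn : Finset (Fin N × Fin L)) (hSn : Sn.card = m + u)
    (q : ℝ) (hq : q = 1 / m + 1 / u)
    (Kf : Matrix (Fin L × Fin N) (Fin L × Fin N) ℝ) (hKf : Kf.PosSemidef)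
    (φ : Fin m → Fin L × Fin N) (hφ : Function.Injective φ)
    (hKbar : (sampMat φ * Kf * (sampMat φ)ᵀ).PosDef)
    (b : ℝ) (hb : 0 < b) :
    TRC q Sn {F : Matrix (Fin N) (Fin L) ℝ |
        ∃ dbar : Fin m → ℝ,
          vecCM F = (Kf * (sampMat φ)ᵀ) *ᵥ dbar ∧
          dbar ⬝ᵥ ((sampMat φ * Kf * (sampMat φ)ᵀ) *ᵥ dbar) ≤ b ^ 2} ≤
      q * b * Real.sqrt
        ((selMat Sn * Kf * (sampMat φ)ᵀ * (sampMat φ * Kf * (sampMat φ)ᵀ)⁻¹ *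
          (sampMat φ * Kf) * (selMat Sn)ᵀ).trace) := by
  classical
  have hKfT : Kfᵀ = Kf := transpose_eq_of_herm hKf.1.eq
  set A := sampMat φ * Kf * (sampMat φ)ᵀ with hA
  set B := selMat Sn * Kf * (sampMat φ)ᵀ with hB
  have hBT : Bᵀ = sampMat φ * Kf * (selMat Sn)ᵀ := by
    rw [hB]
    simp [transpose_mul, hKfT, Matrix.mul_assoc]
  set M := B * A⁻¹ * Bᵀ with hM
  have hgoalM : selMat Sn * Kf * (sampMat φ)ᵀ * A⁻¹ * (sampMat φ * Kf) * (selMat Sn)ᵀ = M := by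
    rw [hM, hBT, hB]
    simp [Matrix.mul_assoc]
  have hMpsd : M.PosSemidef := by
    have h := (hKbar.inv).posSemidef.mul_mul_conjTranspose_same B
    exact h
  -- sign vectors
  set sg : ((Fin N × Fin L) → Bool) → {x // x ∈ Sn} → ℝ :=
    fun ε r => if ε r.1 then 1 else -1 with hsg
  have hQnn : ∀ ε, 0 ≤ sg ε ⬝ᵥ (M *ᵥ sg ε) := fun ε => by simpa using hMpsd.dotProduct_mulVec_nonneg (sg ε)
  have key2 : ∀ (σ : {x // x ∈ Sn} → ℝ) (y : Fin m → ℝ),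
      σ ⬝ᵥ (B *ᵥ y) = (Bᵀ *ᵥ σ) ⬝ᵥ y := by
    intro σ y
    rw [dotProduct_mulVec, ← mulVec_transpose]
  have key3 : ∀ σ : {x // x ∈ Sn} → ℝ,
      σ ⬝ᵥ (M *ᵥ σ) = (Bᵀ *ᵥ σ) ⬝ᵥ (A⁻¹ *ᵥ (Bᵀ *ᵥ σ)) := by
    intro σ
    rw [hM, ← mulVec_mulVec, ← mulVec_mulVec, key2]
  -- per-ε sup bound
  have hb_sup : ∀ ε : (Fin N × Fin L) → Bool,
      sSup ((fun F => ∑ p ∈ Sn, (if ε p then (1 : ℝ) else -1) * F p.1 p.2) ''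
        {F : Matrix (Fin N) (Fin L) ℝ |
          ∃ dbar : Fin m → ℝ, vecCM F = (Kf * (sampMat φ)ᵀ) *ᵥ dbar ∧
            dbar ⬝ᵥ (A *ᵥ dbar) ≤ b ^ 2})
      ≤ b * Real.sqrt (sg ε ⬝ᵥ (M *ᵥ sg ε)) := by
    intro ε
    apply Real.sSup_le
    · rintro x ⟨F, hFmem, rfl⟩
      obtain ⟨dbar, hF, hd⟩ := hFmem
      have hrow : B *ᵥ dbar = fun r : {x // x ∈ Sn} => F r.1.1 r.1.2 := by
        rw [hB, Matrix.mul_assoc, ← mulVec_mulVec, ← hF]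
        funext r
        simp [selMat, mulVec, dotProduct, vecCM, ite_mul]
      have key1 : ∑ p ∈ Sn, (if ε p then (1 : ℝ) else -1) * F p.1 p.2
          = sg ε ⬝ᵥ (B *ᵥ dbar) := by
        rw [← Finset.sum_coe_sort Sn (fun p => (if ε p then (1:ℝ) else -1) * F p.1 p.2)]
        rw [hrow]
        simp [dotProduct, hsg]
      calc ∑ p ∈ Sn, (if ε p then (1 : ℝ) else -1) * F p.1 p.2
          = (Bᵀ *ᵥ sg ε) ⬝ᵥ dbar := by rw [key1, key2]
        _ ≤ Real.sqrt ((Bᵀ *ᵥ sg ε) ⬝ᵥ (A⁻¹ *ᵥ (Bᵀ *ᵥ sg ε)))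
            * Real.sqrt (dbar ⬝ᵥ (A *ᵥ dbar)) := cs_inv A hKbar _ _
        _ ≤ Real.sqrt (sg ε ⬝ᵥ (M *ᵥ sg ε)) * b := by
            rw [← key3]
            have h1 : Real.sqrt (dbar ⬝ᵥ (A *ᵥ dbar)) ≤ b := by
              calc Real.sqrt (dbar ⬝ᵥ (A *ᵥ dbar)) ≤ Real.sqrt (b ^ 2) :=
                    Real.sqrt_le_sqrt hd
                _ = b := Real.sqrt_sq hb.le
            exact mul_le_mul_of_nonneg_left h1 (Real.sqrt_nonneg _)
        _ = b * Real.sqrt (sg ε ⬝ᵥ (M *ᵥ sg ε)) := mul_comm _ _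
    · positivity
  -- orthogonality
  have horth : ∀ r r' : {x // x ∈ Sn},
      ∑ ε : (Fin N × Fin L) → Bool, sg ε r * sg ε r'
        = if r = r' then (2:ℝ) ^ (N * L) else 0 := by
    intro r r'
    by_cases h : r = r'
    · subst h
      rw [if_pos rfl]
      have h1 : ∀ ε : (Fin N × Fin L) → Bool, sg ε r * sg ε r = 1 := by
        intro ε; by_cases hε : ε r.1 <;> simp [hsg, hε]
      rw [Finset.sum_congr rfl (fun ε _ => h1 ε)]
      simp [Finset.card_univ, Fintype.card_fun]
    · rw [if_neg h]
      have hne : (r : Fin N × Fin L) ≠ (r' : Fin N × Fin L) := fun hc => h (Subtype.ext hc)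
      simpa [hsg] using sign_orth hne
  -- expectation of quadratic form = trace
  have hquad : ∑ ε : (Fin N × Fin L) → Bool, sg ε ⬝ᵥ (M *ᵥ sg ε)
      = (2:ℝ) ^ (N * L) * M.trace := by
    have h1 : ∀ ε : (Fin N × Fin L) → Bool, sg ε ⬝ᵥ (M *ᵥ sg ε)
        = ∑ r : {x // x ∈ Sn}, ∑ r' : {x // x ∈ Sn}, (sg ε r * sg ε r') * M r r' := by
      intro ε
      simp only [dotProduct, mulVec, Finset.mul_sum]
      exact Finset.sum_congr rfl fun r _ => Finset.sum_congr rfl fun r' _ => by ring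
    calc ∑ ε : (Fin N × Fin L) → Bool, sg ε ⬝ᵥ (M *ᵥ sg ε)
        = ∑ r : {x // x ∈ Sn}, ∑ r' : {x // x ∈ Sn},
            (∑ ε : (Fin N × Fin L) → Bool, sg ε r * sg ε r') * M r r' := by
          rw [Finset.sum_congr rfl fun ε _ => h1 ε, Finset.sum_comm]
          refine Finset.sum_congr rfl fun r _ => ?_
          rw [Finset.sum_comm]
          exact Finset.sum_congr rfl fun r' _ => (Finset.sum_mul _ _ _).symm
      _ = ∑ r : {x // x ∈ Sn}, (2:ℝ) ^ (N * L) * M r r := by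
          refine Finset.sum_congr rfl fun r _ => ?_
          rw [Finset.sum_congr rfl fun r' _ => by rw [horth r r']]
          simp [ite_mul]
      _ = (2:ℝ) ^ (N * L) * M.trace := by
          rw [Matrix.trace, Finset.mul_sum]
          exact Finset.sum_congr rfl fun r _ => rfl
  -- Jensen step
  have hsum_sqrt : ∑ ε : (Fin N × Fin L) → Bool, Real.sqrt (sg ε ⬝ᵥ (M *ᵥ sg ε))
      ≤ (2:ℝ) ^ (N * L) * Real.sqrt M.trace := by
    have hcs := Finset.sum_mul_sq_le_sq_mul_sq Finset.univ (fun _ => (1:ℝ))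
      (fun ε => Real.sqrt (sg ε ⬝ᵥ (M *ᵥ sg ε)))
    simp only [one_mul, one_pow] at hcs
    have h1 : ∑ _ε : (Fin N × Fin L) → Bool, (1:ℝ) = (2:ℝ) ^ (N * L) := by
      simp [Finset.card_univ, Fintype.card_fun]
    have h2 : ∑ ε : (Fin N × Fin L) → Bool, Real.sqrt (sg ε ⬝ᵥ (M *ᵥ sg ε)) ^ 2
        = ∑ ε : (Fin N × Fin L) → Bool, sg ε ⬝ᵥ (M *ᵥ sg ε) :=
      Finset.sum_congr rfl fun ε _ => Real.sq_sqrt (hQnn ε)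
    rw [h1, h2, hquad] at hcs
    have hnn : 0 ≤ ∑ ε : (Fin N × Fin L) → Bool, Real.sqrt (sg ε ⬝ᵥ (M *ᵥ sg ε)) :=
      Finset.sum_nonneg fun ε _ => Real.sqrt_nonneg _
    have h2pos' : (0:ℝ) < 2 ^ (N * L) := by positivity
    have hge : (0:ℝ) ≤ (2:ℝ) ^ (N * L) * M.trace := by
      rw [← hquad]; exact Finset.sum_nonneg fun ε _ => hQnn ε
    have htr : 0 ≤ M.trace := nonneg_of_mul_nonneg_right hge h2pos'
    have hle : (∑ ε : (Fin N × Fin L) → Bool, Real.sqrt (sg ε ⬝ᵥ (M *ᵥ sg ε))) ^ 2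
        ≤ ((2:ℝ) ^ (N * L)) ^ 2 * M.trace := by nlinarith [hcs]
    have := (Real.le_sqrt hnn (mul_nonneg (sq_nonneg _) htr)).2 hle
    calc ∑ ε : (Fin N × Fin L) → Bool, Real.sqrt (sg ε ⬝ᵥ (M *ᵥ sg ε))
        ≤ Real.sqrt (((2:ℝ) ^ (N * L)) ^ 2 * M.trace) := this
      _ = (2:ℝ) ^ (N * L) * Real.sqrt M.trace := by
          rw [Real.sqrt_mul (sq_nonneg _), Real.sqrt_sq (by positivity)]
  -- assemble
  have hq0 : 0 ≤ q := by rw [hq]; positivity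
  rw [TRC, hgoalM]
  have hsum : ∑ ε : (Fin N × Fin L) → Bool,
      sSup ((fun F => ∑ p ∈ Sn, (if ε p then (1 : ℝ) else -1) * F p.1 p.2) ''
        {F : Matrix (Fin N) (Fin L) ℝ |
          ∃ dbar : Fin m → ℝ, vecCM F = (Kf * (sampMat φ)ᵀ) *ᵥ dbar ∧
            dbar ⬝ᵥ (A *ᵥ dbar) ≤ b ^ 2})
      ≤ (2:ℝ) ^ (N * L) * (b * Real.sqrt M.trace) := by
    calc _ ≤ ∑ ε : (Fin N × Fin L) → Bool, b * Real.sqrt (sg ε ⬝ᵥ (M *ᵥ sg ε)) :=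
          Finset.sum_le_sum fun ε _ => hb_sup ε
      _ = b * ∑ ε : (Fin N × Fin L) → Bool, Real.sqrt (sg ε ⬝ᵥ (M *ᵥ sg ε)) :=
          (Finset.mul_sum _ _ _).symm
      _ ≤ b * ((2:ℝ) ^ (N * L) * Real.sqrt M.trace) :=
          mul_le_mul_of_nonneg_left hsum_sqrt hb.le
      _ = (2:ℝ) ^ (N * L) * (b * Real.sqrt M.trace) := by ring
  have h2pos : (0:ℝ) < 2 ^ (N * L) := by positivity
  calc q * ((∑ ε : Fin N × Fin L → Bool,
        sSup ((fun F => ∑ p ∈ Sn, (if ε p then (1 : ℝ) else -1) * F p.1 p.2) ''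
          {F : Matrix (Fin N) (Fin L) ℝ |
            ∃ dbar : Fin m → ℝ, vecCM F = (Kf * (sampMat φ)ᵀ) *ᵥ dbar ∧
              dbar ⬝ᵥ (A *ᵥ dbar) ≤ b ^ 2})) / 2 ^ (N * L))
      ≤ q * (((2:ℝ) ^ (N * L) * (b * Real.sqrt M.trace)) / 2 ^ (N * L)) := by
        exact mul_le_mul_of_nonneg_left ((div_le_div_iff_of_pos_right h2pos).2 hsum) hq0
    _ = q * b * Real.sqrt M.trace := by
        field_simp
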